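/- (Bounded-ℓ1 deviation of the Hadamard decoder under lattice-shifted noise; key step of Proposition 2.) Let h, v ∈ ℤ^n with ‖v‖₁ = Σ_j |v_j| ≤ r, and let e' ∈ ℂ^n with ‖e'‖₂ < √n / 2. Set s = H h + H v + e' (i.e., the noise is e = Hv + e'). Then the rounding decoder — which writes t = (1/n)H†s and rounds Re(t_j) to the nearest integer for each j — outputs the vector h' = h + v; in particular the output histogram satisfies ‖h' − h‖₁ ≤ r. -/

import Mathlib

open Matrix

/-- Bounded-ℓ1 deviation of the Hadamard decoder under lattice-shifted
noise. Let `h, v ∈ ℤⁿ` with `‖v‖₁ ≤ r`, `e' ∈ ℂⁿ` with `‖e'‖₂ < √n/2`, and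
`s = Hh + Hv + e'`. Then the rounding decoder (`t = (1/n)Hᴴs`, round `Re(t_j)`)
outputs `h' = h + v`; in particular `‖h' − h‖₁ ≤ r`. -/
theorem stmt6 (n : ℕ) (hn : 1 ≤ n)
    (H : Matrix (Fin n) (Fin n) ℂ)
    (hH : Hᴴ * H = (n : ℂ) • (1 : Matrix (Fin n) (Fin n) ℂ))
    (h v : Fin n → ℤ) (r : ℕ)
    (hv : (∑ j, (v j).natAbs) ≤ r)
    (e' : Fin n → ℂ)
    (he' : Real.sqrt (∑ i, Complex.normSq (e' i)) < Real.sqrt n / 2)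
    (s t : Fin n → ℂ)
    (hs : s = H.mulVec (fun j => (h j : ℂ)) + H.mulVec (fun j => (v j : ℂ)) + e')
    (ht : t = (1 / (n : ℂ)) • Hᴴ.mulVec s)
    (h' : Fin n → ℤ)
    (hh' : ∀ j, h' j = round ((t j).re)) :
    (∀ j, h' j = h j + v j) ∧ (∑ j, (h' j - h j).natAbs) ≤ r := by
  have hn0 : (0:ℝ) < n := by exact_mod_cast hn
  have hnC : (n:ℂ) ≠ 0 := by exact_mod_cast hn0.ne'
  -- energy of e'
  have hS : (∑ i, Complex.normSq (e' i)) < n / 4 := by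
    have h2 : (0:ℝ) < Real.sqrt n / 2 := by positivity
    have := (Real.sqrt_lt' h2).mp he'
    calc (∑ i, Complex.normSq (e' i)) < (Real.sqrt n / 2)^2 := this
      _ = n / 4 := by
        rw [div_pow, Real.sq_sqrt hn0.le]; norm_num
  have hSnn : (0:ℝ) ≤ ∑ i, Complex.normSq (e' i) :=
    Finset.sum_nonneg fun i _ => Complex.normSq_nonneg _
  -- column norms
  have hcol : ∀ j, (∑ i, Complex.normSq (H i j)) = n := by
    intro j
    have := congrFun (congrFun hH j) j
    simp only [Matrix.mul_apply, Matrix.smul_apply, Matrix.one_apply_eq, smul_eq_mul,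
      mul_one, Matrix.conjTranspose_apply] at this
    have : (∑ i, ((Complex.normSq (H i j) : ℝ) : ℂ)) = (n : ℂ) := by
      rw [← this]
      refine Finset.sum_congr rfl fun i _ => ?_
      rw [Complex.normSq_eq_conj_mul_self]; rfl
    exact_mod_cast this
  set w : Fin n → ℂ := Hᴴ.mulVec e' with hw
  have hwj : ∀ j, ‖w j‖ < n / 2 := by
    intro j
    have habs : ‖w j‖ ≤ ∑ i, ‖H i j‖ * ‖e' i‖ := by
      rw [hw, Matrix.mulVec, dotProduct]
      refine (norm_sum_le _ _).trans ?_
      refine le_of_eq (Finset.sum_congr rfl fun i _ => ?_)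
      simp [Matrix.conjTranspose_apply, _root_.map_mul]
    have hcs : (∑ i, ‖H i j‖ * ‖e' i‖)^2 ≤
        (∑ i, ‖H i j‖^2) * (∑ i, ‖e' i‖^2) :=
      Finset.sum_mul_sq_le_sq_mul_sq Finset.univ _ _
    have hcs2 : (∑ i, ‖H i j‖ * ‖e' i‖)^2 <
        (n/2)^2 := by
      have e1 : (∑ i, ‖H i j‖^2) = n := by
        rw [← hcol j]; exact Finset.sum_congr rfl fun i _ => Complex.sq_norm _
      have e2 : (∑ i, ‖e' i‖^2) = ∑ i, Complex.normSq (e' i) := by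
        exact Finset.sum_congr rfl fun i _ => Complex.sq_norm _
      calc (∑ i, ‖H i j‖ * ‖e' i‖)^2
          ≤ (n:ℝ) * (∑ i, Complex.normSq (e' i)) := by rw [← e1, ← e2]; exact hcs
        _ < n * (n/4) := by exact (mul_lt_mul_iff_right₀ hn0).mpr hS
        _ = (n/2)^2 := by ring
    have hsum_lt : (∑ i, ‖H i j‖ * ‖e' i‖) < n/2 := by
      have : (0:ℝ) ≤ n/2 := by positivity
      exact lt_of_pow_lt_pow_left₀ 2 this hcs2
    exact lt_of_le_of_lt habs hsum_lt
  -- main formula for t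
  have htj : ∀ j, t j = ((h j : ℂ) + v j) + (1/(n:ℂ)) * w j := by
    intro j
    have hmv : Hᴴ.mulVec s = (n:ℂ) • (fun j => (h j : ℂ)) + (n:ℂ) • (fun j => (v j : ℂ)) + w := by
      rw [hs, Matrix.mulVec_add, Matrix.mulVec_add, Matrix.mulVec_mulVec,
        Matrix.mulVec_mulVec, hH, Matrix.smul_mulVec, Matrix.smul_mulVec,
        Matrix.one_mulVec, Matrix.one_mulVec]
    rw [ht, hmv]
    simp only [Pi.smul_apply, Pi.add_apply, smul_eq_mul]
    field_simp
  have hround : ∀ j, h' j = h j + v j := by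
    intro j
    have hre : (t j).re = ((h j + v j : ℤ) : ℝ) + ((1/(n:ℂ)) * w j).re := by
      rw [htj j]
      push_cast
      simp [Complex.add_re]
    have heps : |((1/(n:ℂ)) * w j).re| < 1/2 := by
      have h1 : |((1/(n:ℂ)) * w j).re| ≤ ‖(1/(n:ℂ)) * w j‖ :=
        Complex.abs_re_le_norm _
      have h2 : ‖(1/(n:ℂ)) * w j‖ = (1/(n:ℝ)) * ‖w j‖ := by
        rw [norm_mul]
        congr 1
        simp [hn0.le]
      have h3 : (1/(n:ℝ)) * ‖w j‖ < (1/(n:ℝ)) * (n/2) := by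
        apply mul_lt_mul_of_pos_left (hwj j)
        positivity
      have h4 : (1/(n:ℝ)) * (n/2) = 1/2 := by field_simp
      linarith [h1, h2 ▸ (h4 ▸ h3)]
    rw [hh' j, hre, add_comm, round_add_intCast]
    have : round (((1/(n:ℂ)) * w j).re) = 0 := by
      rw [round_eq_zero_iff]
      constructor
      · linarith [abs_lt.mp heps |>.1]
      · linarith [abs_lt.mp heps |>.2]
    rw [this]; ring
  refine ⟨hround, ?_⟩
  calc (∑ j, (h' j - h j).natAbs) = ∑ j, (v j).natAbs := by
        refine Finset.sum_congr rfl fun j _ => ?_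
        rw [hround j]; ring_nf
    _ ≤ r := hv
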